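/- One-step descent for D-SGT: let x_1,…,x_n ∈ ℝ^d with average x̄, and let v_1,…,v_n be independent random vectors in ℝ^d with E[v_i] = ∇f_i(x_i) and E‖v_i − ∇f_i(x_i)‖² ≤ σ². Set v̄ := (1/n)∑_i v_i and x̄⁺ := x̄ − η·v̄ for η ≥ 0. Then E[f(x̄⁺)] − f(x̄) ≤ −(3η/4)·‖∇f(x̄)‖² + 2η²·L·σ²/n + (η + 2η²L)·(L²/n)·∑_{i=1}^n ‖x_i − x̄‖² + η²·L·G². -/

import Mathlib

open MeasureTheory ProbabilityTheory Finset

lemma descent_aux {E : Type*} [NormedAddCommGroup E] [InnerProductSpace ℝ E] [CompleteSpace E]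
    (F : E → ℝ) (L : ℝ) (hL : 0 ≤ L)
    (hdiff : ∀ z, DifferentiableAt ℝ F z)
    (hlip : ∀ a b, ‖gradient F a - gradient F b‖ ≤ L * ‖a - b‖) (a u : E) :
    F (a + u) ≤ F a + inner ℝ (gradient F a) u + L / 2 * ‖u‖ ^ 2 := by
  set g : E → E := fun z => gradient F z with hg
  have hgrad : ∀ z, HasGradientAt F (g z) z := fun z => (hdiff z).hasGradientAt
  have hγ : ∀ t : ℝ, HasDerivAt (fun t : ℝ => a + t • u) u t := by
    intro t
    simpa using ((hasDerivAt_id t).smul_const u).const_add a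
  have hφ : ∀ t : ℝ, HasDerivAt (fun t : ℝ => F (a + t • u))
      (inner ℝ (g (a + t • u)) u : ℝ) t := by
    intro t
    have h1 := ((hgrad (a + t • u)).hasFDerivAt).comp_hasDerivAt t (hγ t)
    simp only [InnerProductSpace.toDual_apply_apply, Function.comp_def] at h1
    exact h1
  have hgc : Continuous g := by
    rcases eq_or_lt_of_le hL with h0 | h0
    · have : ∀ a b : E, g a = g b := by
        intro a b
        have := hlip a b
        rw [← h0] at this
        have h2 : g a - g b = 0 := by
          have h3 : ‖g a - g b‖ ≤ 0 := by simpa using this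
          simpa using le_antisymm h3 (norm_nonneg _)
        exact sub_eq_zero.mp h2
      exact continuous_const.congr fun z => (this a z)
    · exact (LipschitzWith.of_dist_le_mul (K := ⟨L, hL⟩) (fun a b => by
        rw [dist_eq_norm, dist_eq_norm]; exact hlip a b)).continuous
  have hcont : Continuous fun t : ℝ => (inner ℝ (g (a + t • u)) u : ℝ) := by
    exact (hgc.comp (by continuity)).inner continuous_const
  have hFTC : F (a + u) - F a = ∫ t in (0:ℝ)..1, (inner ℝ (g (a + t • u)) u : ℝ) := by
    have := intervalIntegral.integral_eq_sub_of_hasDerivAt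
      (f := fun t : ℝ => F (a + t • u)) (a := 0) (b := 1)
      (fun t _ => hφ t) (hcont.intervalIntegrable 0 1)
    simp only [one_smul, zero_smul, add_zero] at this
    linarith [this]
  have hbound : ∫ t in (0:ℝ)..1, (inner ℝ (g (a + t • u)) u : ℝ)
      ≤ inner ℝ (g a) u + L / 2 * ‖u‖ ^ 2 := by
    have h1 : ∫ t in (0:ℝ)..1, (inner ℝ (g (a + t • u)) u : ℝ)
        ≤ ∫ t in (0:ℝ)..1, (inner ℝ (g a) u + L * t * ‖u‖ ^ 2 : ℝ) := by
      apply intervalIntegral.integral_mono_on (by norm_num)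
        (hcont.intervalIntegrable 0 1)
        (by apply Continuous.intervalIntegrable; continuity)
      intro t ht
      have ht0 : 0 ≤ t := ht.1
      have : (inner ℝ (g (a + t • u)) u : ℝ) - inner ℝ (g a) u
          = inner ℝ (g (a + t • u) - g a) u := by rw [inner_sub_left]
      have hle : (inner ℝ (g (a + t • u) - g a) u : ℝ) ≤ L * t * ‖u‖ ^ 2 := by
        calc (inner ℝ (g (a + t • u) - g a) u : ℝ) ≤ ‖g (a + t • u) - g a‖ * ‖u‖ :=
              real_inner_le_norm _ _
          _ ≤ (L * ‖(a + t • u) - a‖) * ‖u‖ := by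
              gcongr; exact hlip _ _
          _ = L * t * ‖u‖ ^ 2 := by
              rw [add_sub_cancel_left, norm_smul, Real.norm_eq_abs, abs_of_nonneg ht0]; ring
      linarith
    have h2 : ∫ t in (0:ℝ)..1, (inner ℝ (g a) u + L * t * ‖u‖ ^ 2 : ℝ)
        = inner ℝ (g a) u + L / 2 * ‖u‖ ^ 2 := by
      rw [intervalIntegral.integral_add (by apply Continuous.intervalIntegrable; continuity)
        (by apply Continuous.intervalIntegrable; continuity)]
      simp only [intervalIntegral.integral_const, smul_eq_mul]
      have : ∫ t in (0:ℝ)..1, L * t * ‖u‖ ^ 2 = L / 2 * ‖u‖ ^ 2 := by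
        have : (fun t : ℝ => L * t * ‖u‖ ^ 2) = fun t : ℝ => (L * ‖u‖ ^ 2) * t := by
          ext t; ring
        rw [this, intervalIntegral.integral_const_mul, integral_id]
        ring
      rw [this]; ring
    linarith
  linarith [hFTC ▸ hbound]


lemma grad_avg {E : Type*} [NormedAddCommGroup E] [InnerProductSpace ℝ E] [CompleteSpace E]
    (n : ℕ) (f : Fin n → E → ℝ) (hdiff : ∀ i z, DifferentiableAt ℝ (f i) z) (z : E) :
    HasGradientAt (fun y => (∑ i, f i y) / n) ((n : ℝ)⁻¹ • ∑ i, gradient (f i) z) z := by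
  have h1 : ∀ i, HasFDerivAt (f i) ((InnerProductSpace.toDual ℝ E) (gradient (f i) z)) z :=
    fun i => ((hdiff i z).hasGradientAt).hasFDerivAt
  have h2 : HasFDerivAt (fun y => ∑ i, f i y)
      (∑ i, (InnerProductSpace.toDual ℝ E) (gradient (f i) z)) z :=
    HasFDerivAt.fun_sum (fun i _ => h1 i)
  have h3 := h2.const_smul (n : ℝ)⁻¹
  rw [hasGradientAt_iff_hasFDerivAt]
  have e1 : (fun y => (∑ i, f i y) / (n:ℝ)) = (n:ℝ)⁻¹ • fun y => ∑ i, f i y := by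
    ext y; simp [div_eq_inv_mul]
  have e2 : (InnerProductSpace.toDual ℝ E) ((n:ℝ)⁻¹ • ∑ i, gradient (f i) z) = (n:ℝ)⁻¹ • ∑ i, InnerProductSpace.toDual ℝ E (gradient (f i) z) := by
    rw [map_smul, map_sum]
  rw [e1, e2]; exact h3


lemma norm_sq_eucl {d : ℕ} (y : EuclideanSpace ℝ (Fin d)) : ‖y‖ ^ 2 = ∑ k, y k ^ 2 := by
  rw [EuclideanSpace.norm_eq, Real.sq_sqrt (by positivity)]
  simp [sq_abs]

lemma var_sum_indep (d n : ℕ) (Ω : Type) [MeasurableSpace Ω] (μ : Measure Ω)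
    [IsProbabilityMeasure μ]
    (w : Fin n → Ω → EuclideanSpace ℝ (Fin d))
    (hmeas : ∀ i, Measurable (w i))
    (hindep : iIndepFun w μ)
    (hL2 : ∀ i, MemLp (w i) 2 μ)
    (hmean0 : ∀ i, ∫ ω, w i ω ∂μ = 0) :
    ∫ ω, ‖∑ i, w i ω‖ ^ 2 ∂μ = ∑ i, ∫ ω, ‖w i ω‖ ^ 2 ∂μ := by
  set Y : Fin n → Fin d → Ω → ℝ := fun i k ω => w i ω k with hY
  have hYL2 : ∀ i k, MemLp (Y i k) 2 μ := fun i k => by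
    simpa [Function.comp_def] using (EuclideanSpace.proj (𝕜 := ℝ) k).comp_memLp' (hL2 i)
  have hYmean : ∀ i k, ∫ ω, Y i k ω ∂μ = 0 := fun i k => by
    have := ((EuclideanSpace.proj (𝕜 := ℝ) k)).integral_comp_comm ((hL2 i).integrable one_le_two)
    simpa [Function.comp_def, hmean0 i] using this
  have hYindep : ∀ k, ∀ i j : Fin n, i ≠ j → IndepFun (Y i k) (Y j k) μ := by
    intro k i j hij
    exact (hindep.indepFun hij).comp (EuclideanSpace.proj (𝕜 := ℝ) k).measurable
      (EuclideanSpace.proj (𝕜 := ℝ) k).measurable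
  calc ∫ ω, ‖∑ i, w i ω‖ ^ 2 ∂μ
      = ∫ ω, ∑ k, (∑ i, Y i k ω) ^ 2 ∂μ := by
        congr 1; ext ω; rw [norm_sq_eucl]; congr 1; ext k; congr 1
        simp [Y]
    _ = ∑ k, ∫ ω, (∑ i, Y i k ω) ^ 2 ∂μ := by
        apply integral_finset_sum
        intro k _
        have := (memLp_finset_sum' univ (fun i _ => hYL2 i k)).integrable_sq
        simpa using this
    _ = ∑ k, ∑ i, ∫ ω, Y i k ω ^ 2 ∂μ := by
        apply Finset.sum_congr rfl
        intro k _
        have hsum2 : MemLp (∑ i, Y i k) 2 μ := memLp_finset_sum' univ (fun i _ => hYL2 i k)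
        have hv := IndepFun.variance_sum (μ := μ) (X := fun i => Y i k) (s := univ)
          (fun i _ => hYL2 i k) (fun i _ j _ hij => hYindep k i j hij)
        have hmean_sum : ∫ ω, (∑ i, Y i k) ω ∂μ = 0 := by
          simp only [Finset.sum_apply]
          rw [integral_finset_sum univ (fun i _ => (hYL2 i k).integrable one_le_two)]
          simp [hYmean]
        rw [variance_eq_sub hsum2, hmean_sum] at hv
        have hvar_each : ∀ i, variance (Y i k) μ = ∫ ω, Y i k ω ^ 2 ∂μ := by
          intro i
          rw [variance_eq_sub (hYL2 i k), hYmean i k]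
          simp
        calc ∫ ω, (∑ i, Y i k ω) ^ 2 ∂μ
            = μ[(∑ i, Y i k) ^ 2] := by congr 1; ext ω; simp
          _ = ∑ i, variance (Y i k) μ := by rw [← hv]; ring_nf
          _ = ∑ i, ∫ ω, Y i k ω ^ 2 ∂μ := by simp [hvar_each]
    _ = ∑ i, ∑ k, ∫ ω, Y i k ω ^ 2 ∂μ := Finset.sum_comm
    _ = ∑ i, ∫ ω, ‖w i ω‖ ^ 2 ∂μ := by
        apply Finset.sum_congr rfl
        intro i _
        rw [← integral_finset_sum]
        · congr 1; ext ω; rw [norm_sq_eucl]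
        · intro k _
          have := (hYL2 i k).integrable_sq
          simpa using this

set_option maxHeartbeats 1000000 in
lemma scalar_final (η L s2n B D H S G I : ℝ) (hη : 0 ≤ η) (hL : 0 ≤ L) (hs : 0 ≤ s2n)
    (hB : 0 ≤ B) (hD : 0 ≤ D) (hS : 0 ≤ S) (hG0 : 0 ≤ G) (hH0 : 0 ≤ H)
    (hDS : D ^ 2 ≤ S) (hH : H ≤ D + B) (hBG : B ≤ G) (hI : I ≤ B * D) :
    -η * (B ^ 2 - I) + L / 2 * η ^ 2 * (s2n + H ^ 2)
      ≤ -(3 * η / 4) * B ^ 2 + 2 * η ^ 2 * L * s2n + (η + 2 * η ^ 2 * L) * S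
        + η ^ 2 * L * G ^ 2 := by
  have hH2 : H ^ 2 ≤ (D + B) ^ 2 := by nlinarith [mul_self_le_mul_self hH0 hH]
  have h1 : η * I ≤ η * (B * D) := by nlinarith
  have h2 : B * D ≤ B ^ 2 / 4 + D ^ 2 := by nlinarith [sq_nonneg (B / 2 - D)]
  have h3 : η * (B * D) ≤ η * (B ^ 2 / 4 + S) := by nlinarith
  have h4 : (D + B) ^ 2 ≤ 2 * D ^ 2 + 2 * B ^ 2 := by nlinarith [sq_nonneg (D - B)]
  have h5 : L / 2 * η ^ 2 * H ^ 2 ≤ L / 2 * η ^ 2 * (2 * S + 2 * G ^ 2) := by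
    have : H ^ 2 ≤ 2 * S + 2 * G ^ 2 := by nlinarith
    nlinarith [mul_nonneg (mul_nonneg hL (sq_nonneg η)) (sub_nonneg.mpr this)]
  have h6 : L / 2 * η ^ 2 * s2n ≤ 2 * η ^ 2 * L * s2n := by nlinarith [mul_nonneg (mul_nonneg hL (sq_nonneg η)) hs]
  have h7 : L * η ^ 2 * S ≤ 2 * η ^ 2 * L * S := by nlinarith [mul_nonneg (mul_nonneg hL (sq_nonneg η)) hS]
  nlinarith [mul_nonneg hη hS]

set_option maxHeartbeats 1000000 in
/-- **One-step descent for D-SGT.** With deterministic points `x_i`, independent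
unbiased oracles `v_i` with variance at most `σ²`, `v̄ := (1/n)∑ v_i` and
`x̄⁺ := x̄ − η v̄`, one has
`E[f(x̄⁺)] − f(x̄) ≤ −(3η/4)‖∇f(x̄)‖² + 2η²Lσ²/n + (η + 2η²L)(L²/n)∑‖x_i − x̄‖² + η²LG²`. -/
theorem dsgt_one_step_descent
    (d n : ℕ) (hn : 0 < n)
    (Ω : Type) [MeasurableSpace Ω] (μ : Measure Ω) [IsProbabilityMeasure μ]
    (f : Fin n → EuclideanSpace ℝ (Fin d) → ℝ) (L σ G : ℝ) (Gi : Fin n → ℝ)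
    (hL : 0 ≤ L) (hσ : 0 ≤ σ)
    (hdiff : ∀ i x, DifferentiableAt ℝ (f i) x)
    (hsmooth : ∀ i x y, ‖gradient (f i) x - gradient (f i) y‖ ≤ L * ‖x - y‖)
    (hGi : ∀ i x, ‖gradient (f i) x‖ ≤ Gi i)
    (hG : G = (∑ i, Gi i) / n)
    (x : Fin n → EuclideanSpace ℝ (Fin d)) (v : Fin n → Ω → EuclideanSpace ℝ (Fin d))
    (hmeas : ∀ i, Measurable (v i))
    (hindep : iIndepFun v μ)
    (hint : ∀ i, Integrable (v i) μ)
    (hint2 : ∀ i, Integrable (fun ω => ‖v i ω‖ ^ 2) μ)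
    (hmean : ∀ i, ∫ ω, v i ω ∂μ = gradient (f i) (x i))
    (hvar : ∀ i, ∫ ω, ‖v i ω - gradient (f i) (x i)‖ ^ 2 ∂μ ≤ σ ^ 2)
    (η : ℝ) (hη : 0 ≤ η) :
    (∫ ω, (∑ i, f i ((n : ℝ)⁻¹ • (∑ j, x j) - η • ((n : ℝ)⁻¹ • ∑ j, v j ω))) / n ∂μ)
        - (∑ i, f i ((n : ℝ)⁻¹ • ∑ j, x j)) / n
      ≤ -(3 * η / 4) *
            ‖gradient (fun y => (∑ i, f i y) / n) ((n : ℝ)⁻¹ • ∑ j, x j)‖ ^ 2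
        + 2 * η ^ 2 * L * σ ^ 2 / n
        + (η + 2 * η ^ 2 * L) * (L ^ 2 / n) * ∑ i, ‖x i - (n : ℝ)⁻¹ • ∑ j, x j‖ ^ 2
        + η ^ 2 * L * G ^ 2 := by
  have hn' : (0 : ℝ) < n := Nat.cast_pos.mpr hn
  set xbar : EuclideanSpace ℝ (Fin d) := (n : ℝ)⁻¹ • ∑ j, x j with hxbar
  set Fav : EuclideanSpace ℝ (Fin d) → ℝ := fun y => (∑ i, f i y) / n with hFav
  set g : Fin n → EuclideanSpace ℝ (Fin d) := fun i => gradient (f i) (x i) with hgdef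
  set gb : Fin n → EuclideanSpace ℝ (Fin d) := fun i => gradient (f i) xbar with hgbdef
  set h : EuclideanSpace ℝ (Fin d) := (n : ℝ)⁻¹ • ∑ i, g i with hhdef
  set b : EuclideanSpace ℝ (Fin d) := (n : ℝ)⁻¹ • ∑ i, gb i with hbdef
  set V : Ω → EuclideanSpace ℝ (Fin d) := fun ω => (n : ℝ)⁻¹ • ∑ j, v j ω with hVdef
  -- gradient facts
  have hgradF : ∀ z : EuclideanSpace ℝ (Fin d), HasGradientAt Fav ((n : ℝ)⁻¹ • ∑ i, gradient (f i) z) z :=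
    fun z => grad_avg n f hdiff z
  have hgradF_eq : ∀ z : EuclideanSpace ℝ (Fin d), gradient Fav z = (n : ℝ)⁻¹ • ∑ i, gradient (f i) z :=
    fun z => (hgradF z).gradient
  have hdiffF : ∀ z : EuclideanSpace ℝ (Fin d), DifferentiableAt ℝ Fav z := fun z => (hgradF z).differentiableAt
  have hgradF_xbar : gradient Fav xbar = b := by rw [hgradF_eq]
  have hlipF : ∀ a c : EuclideanSpace ℝ (Fin d), ‖gradient Fav a - gradient Fav c‖ ≤ L * ‖a - c‖ := by
    intro a c
    rw [hgradF_eq, hgradF_eq, ← smul_sub, ← Finset.sum_sub_distrib, norm_smul]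
    have h1 : ‖∑ i, (gradient (f i) a - gradient (f i) c)‖ ≤ ∑ i : Fin n, L * ‖a - c‖ :=
      (norm_sum_le _ _).trans (Finset.sum_le_sum fun i _ => hsmooth i a c)
    rw [Finset.sum_const, card_univ, Fintype.card_fin, nsmul_eq_mul] at h1
    calc ‖((n:ℝ)⁻¹ : ℝ)‖ * ‖∑ i, (gradient (f i) a - gradient (f i) c)‖
        ≤ (n:ℝ)⁻¹ * (n * (L * ‖a - c‖)) := by
          rw [Real.norm_eq_abs, abs_of_nonneg (by positivity)]
          gcongr
      _ = L * ‖a - c‖ := by field_simp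
  -- pointwise descent
  have hpt : ∀ ω, Fav (xbar - η • V ω) ≤ Fav xbar - η * inner ℝ b (V ω)
      + L / 2 * η ^ 2 * ‖V ω‖ ^ 2 := by
    intro ω
    have := descent_aux Fav L hL hdiffF hlipF xbar (-(η • V ω))
    rw [← sub_eq_add_neg] at this
    rw [hgradF_xbar] at this
    calc Fav (xbar - η • V ω)
        ≤ Fav xbar + inner ℝ b (-(η • V ω)) + L / 2 * ‖-(η • V ω)‖ ^ 2 := this
      _ = Fav xbar - η * inner ℝ b (V ω) + L / 2 * η ^ 2 * ‖V ω‖ ^ 2 := by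
          rw [inner_neg_right, real_inner_smul_right, norm_neg, norm_smul,
            Real.norm_eq_abs, abs_of_nonneg hη, mul_pow]
          ring
  -- integrability
  have hVmeas : Measurable V := by
    refine Measurable.const_smul (g := fun ω => ∑ j, v j ω) ?_ ((n:ℝ)⁻¹)
    exact Finset.measurable_sum univ fun j _ => hmeas j
  have hVint : Integrable V μ := by
    exact ((integrable_finset_sum univ fun j _ => hint j).smul ((n:ℝ)⁻¹))
  have hvL2 : ∀ i, MemLp (v i) 2 μ := fun i =>
    (memLp_two_iff_integrable_sq_norm (hmeas i).aestronglyMeasurable).2 (hint2 i)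
  have hVL2 : MemLp V 2 μ := by
    have h0 := (memLp_finset_sum' univ fun i _ => hvL2 i).const_smul (c := (n:ℝ)⁻¹)
    have he : V = (n:ℝ)⁻¹ • ∑ i, v i := by
      funext ω; simp [hVdef, Finset.sum_apply]
    rw [he]; exact h0
  have hV2int : Integrable (fun ω => ‖V ω‖ ^ 2) μ :=
    (memLp_two_iff_integrable_sq_norm hVL2.aestronglyMeasurable).1 hVL2
  have hVintval : ∫ ω, V ω ∂μ = h := by
    rw [hVdef, hhdef]
    rw [integral_smul]
    congr 1
    rw [integral_finset_sum univ fun j _ => hint j]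
    exact Finset.sum_congr rfl fun j _ => hmean j
  -- Lipschitz bound on Fav for integrability of LHS
  have hfl : ∀ i, ∀ y z : EuclideanSpace ℝ (Fin d), ‖f i y - f i z‖ ≤ Gi i * ‖y - z‖ := by
    intro i y z
    apply Convex.norm_image_sub_le_of_norm_fderiv_le
      (fun w _ => hdiff i w) _ convex_univ (Set.mem_univ z) (Set.mem_univ y)
    intro w _
    rw [((hdiff i w).hasGradientAt.hasFDerivAt).fderiv]
    rw [LinearIsometryEquiv.norm_map]
    exact hGi i w
  have hG0 : 0 ≤ G := by
    rw [hG]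
    apply div_nonneg _ (le_of_lt hn')
    exact Finset.sum_nonneg fun i _ => (norm_nonneg _).trans (hGi i 0)
  have hFavLip : ∀ y z : EuclideanSpace ℝ (Fin d), |Fav y - Fav z| ≤ G * ‖y - z‖ := by
    intro y z
    rw [hFav]
    have : (∑ i, f i y) / n - (∑ i, f i z) / n = (∑ i, (f i y - f i z)) / n := by
      rw [Finset.sum_sub_distrib]; ring
    rw [this, abs_div, abs_of_nonneg (le_of_lt hn'), div_le_iff₀ hn'] at *
    · calc |∑ i, (f i y - f i z)| ≤ ∑ i, |f i y - f i z| := Finset.abs_sum_le_sum_abs _ _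
        _ ≤ ∑ i, Gi i * ‖y - z‖ := Finset.sum_le_sum fun i _ => by
            simpa [Real.norm_eq_abs] using hfl i y z
        _ = (∑ i, Gi i) * ‖y - z‖ := by rw [Finset.sum_mul]
        _ = G * ‖y - z‖ * n := by rw [hG]; field_simp; try ring
  have hLHSmeas : AEStronglyMeasurable (fun ω => Fav (xbar - η • V ω)) μ := by
    have hc : Continuous Fav := Differentiable.continuous (𝕜 := ℝ) (fun z => hdiffF z)
    exact (hc.measurable.comp (measurable_const.sub (hVmeas.const_smul η))).aestronglyMeasurable
  have hLHSint : Integrable (fun ω => Fav (xbar - η • V ω)) μ := by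
    apply Integrable.mono' ((integrable_const |Fav xbar|).add ((hVint.norm).const_mul (G * η)))
      hLHSmeas
    filter_upwards with ω
    calc ‖Fav (xbar - η • V ω)‖ = |Fav (xbar - η • V ω)| := rfl
      _ ≤ |Fav xbar| + |Fav (xbar - η • V ω) - Fav xbar| := by
          have := abs_add_le (Fav xbar) (Fav (xbar - η • V ω) - Fav xbar)
          simpa using this
      _ ≤ |Fav xbar| + G * η * ‖V ω‖ := by
          gcongr
          calc |Fav (xbar - η • V ω) - Fav xbar| ≤ G * ‖(xbar - η • V ω) - xbar‖ :=
                hFavLip _ _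
            _ = G * η * ‖V ω‖ := by
                rw [sub_sub_cancel_left, norm_neg, norm_smul, Real.norm_eq_abs,
                  abs_of_nonneg hη]
                ring
  have hA : Integrable (fun ω => Fav xbar - η * inner ℝ b (V ω)) μ :=
    (integrable_const _).sub ((hVint.const_inner b).const_mul η)
  have hB2 : Integrable (fun ω => L / 2 * η ^ 2 * ‖V ω‖ ^ 2) μ := hV2int.const_mul _
  have hRHSint : Integrable (fun ω => Fav xbar - η * inner ℝ b (V ω)
      + L / 2 * η ^ 2 * ‖V ω‖ ^ 2) μ := hA.add hB2
  -- integrate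
  have hstep1 : ∫ ω, Fav (xbar - η • V ω) ∂μ
      ≤ Fav xbar - η * inner ℝ b h + L / 2 * η ^ 2 * (∫ ω, ‖V ω‖ ^ 2 ∂μ) := by
    have h1 : ∫ ω, Fav (xbar - η • V ω) ∂μ ≤ ∫ ω, (Fav xbar - η * inner ℝ b (V ω)
        + L / 2 * η ^ 2 * ‖V ω‖ ^ 2) ∂μ := integral_mono hLHSint hRHSint hpt
    have h2 : ∫ ω, (Fav xbar - η * inner ℝ b (V ω) + L / 2 * η ^ 2 * ‖V ω‖ ^ 2) ∂μ
        = Fav xbar - η * inner ℝ b h + L / 2 * η ^ 2 * (∫ ω, ‖V ω‖ ^ 2 ∂μ) := by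
      rw [integral_add hA hB2]
      rw [integral_sub (integrable_const _) ((hVint.const_inner b).const_mul η)]
      rw [integral_const, integral_const_mul, integral_const_mul, integral_inner hVint b,
        hVintval]
      simp
    linarith [h2 ▸ h1]
  -- variance bound
  have hwL2 : ∀ i, MemLp (fun ω => v i ω - g i) 2 μ := fun i =>
    (hvL2 i).sub (memLp_const (g i))
  have hwmean : ∀ i, ∫ ω, (v i ω - g i) ∂μ = 0 := by
    intro i
    rw [integral_sub (hint i) (integrable_const _), hmean i, integral_const]
    simp [hgdef]
  have hwindep : iIndepFun
      (fun i ω => v i ω - g i) μ := by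
    have := hindep.comp (fun i (y : EuclideanSpace ℝ (Fin d)) => y - g i)
      (fun i => measurable_id.sub measurable_const)
    exact this
  have hwvar : ∫ ω, ‖∑ i, (v i ω - g i)‖ ^ 2 ∂μ ≤ n * σ ^ 2 := by
    rw [var_sum_indep d n Ω μ (fun i ω => v i ω - g i)
      (fun i => (hmeas i).sub measurable_const) hwindep hwL2 hwmean]
    calc ∑ i, ∫ ω, ‖v i ω - g i‖ ^ 2 ∂μ ≤ ∑ i : Fin n, σ ^ 2 :=
        Finset.sum_le_sum fun i _ => hvar i
      _ = n * σ ^ 2 := by rw [Finset.sum_const, card_univ, Fintype.card_fin, nsmul_eq_mul]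
  have hVarV : ∫ ω, ‖V ω - h‖ ^ 2 ∂μ ≤ σ ^ 2 / n := by
    have hVh : ∀ ω, V ω - h = (n : ℝ)⁻¹ • ∑ i, (v i ω - g i) := by
      intro ω
      rw [hVdef, hhdef, ← smul_sub, Finset.sum_sub_distrib]
    have h1 : ∀ ω, ‖V ω - h‖ ^ 2 = ((n:ℝ)⁻¹) ^ 2 * ‖∑ i, (v i ω - g i)‖ ^ 2 := by
      intro ω
      rw [hVh ω, norm_smul, Real.norm_eq_abs, abs_of_nonneg (by positivity), mul_pow]
    calc ∫ ω, ‖V ω - h‖ ^ 2 ∂μ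
        = ((n:ℝ)⁻¹) ^ 2 * ∫ ω, ‖∑ i, (v i ω - g i)‖ ^ 2 ∂μ := by
          rw [← integral_const_mul]
          exact integral_congr_ae (Filter.Eventually.of_forall h1)
      _ ≤ ((n:ℝ)⁻¹) ^ 2 * (n * σ ^ 2) := by gcongr
      _ = σ ^ 2 / n := by field_simp
  have hVnormsq : ∫ ω, ‖V ω‖ ^ 2 ∂μ ≤ σ ^ 2 / n + ‖h‖ ^ 2 := by
    have hexp : ∀ ω, ‖V ω‖ ^ 2 = ‖V ω - h‖ ^ 2 + 2 * inner ℝ h (V ω - h) + ‖h‖ ^ 2 := by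
      intro ω
      have := norm_add_sq_real (V ω - h) h
      rw [sub_add_cancel] at this
      rw [this, real_inner_comm]
      try ring
    have hVsubint : Integrable (fun ω => V ω - h) μ := hVint.sub (integrable_const _)
    have hVsub2int : Integrable (fun ω => ‖V ω - h‖ ^ 2) μ :=
      (memLp_two_iff_integrable_sq_norm (hVL2.sub (memLp_const h)).aestronglyMeasurable).1
        (hVL2.sub (memLp_const h))
    have : ∫ ω, ‖V ω‖ ^ 2 ∂μ = (∫ ω, ‖V ω - h‖ ^ 2 ∂μ)
        + 2 * inner ℝ h ((∫ ω, V ω ∂μ) - h) + ‖h‖ ^ 2 := by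
      calc ∫ ω, ‖V ω‖ ^ 2 ∂μ
          = ∫ ω, (‖V ω - h‖ ^ 2 + 2 * inner ℝ h (V ω - h) + ‖h‖ ^ 2) ∂μ :=
            integral_congr_ae (Filter.Eventually.of_forall hexp)
        _ = (∫ ω, ‖V ω - h‖ ^ 2 ∂μ) + 2 * inner ℝ h ((∫ ω, V ω ∂μ) - h) + ‖h‖ ^ 2 := by
            have hc1 : Integrable (fun ω => (2:ℝ) * inner ℝ h (V ω - h)) μ :=
              (hVsubint.const_inner h).const_mul 2
            have hc2 : Integrable (fun ω => ‖V ω - h‖ ^ 2 + 2 * inner ℝ h (V ω - h)) μ :=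
              hVsub2int.add hc1
            rw [integral_add hc2 (integrable_const _),
              integral_add hVsub2int hc1,
              integral_const, integral_const_mul, integral_inner hVsubint h]
            rw [integral_sub hVint (integrable_const _), integral_const]
            simp
    rw [this, hVintval]
    simp only [sub_self, inner_zero_right, mul_zero, add_zero]
    linarith [hVarV]
  -- geometric bounds
  have hsum_sq : ∀ u : Fin n → EuclideanSpace ℝ (Fin d), ‖∑ i, u i‖ ^ 2 ≤ n * ∑ i, ‖u i‖ ^ 2 := by
    intro u
    calc ‖∑ i, u i‖ ^ 2 ≤ (∑ i, ‖u i‖) ^ 2 := by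
          apply pow_le_pow_left₀ (norm_nonneg _) (norm_sum_le _ _)
      _ ≤ (univ : Finset (Fin n)).card * ∑ i, ‖u i‖ ^ 2 := sq_sum_le_card_mul_sum_sq
      _ = n * ∑ i, ‖u i‖ ^ 2 := by rw [card_univ, Fintype.card_fin]
  have hbh : ‖b - h‖ ^ 2 ≤ L ^ 2 / n * ∑ i, ‖x i - xbar‖ ^ 2 := by
    have h1 : b - h = (n : ℝ)⁻¹ • ∑ i, (gb i - g i) := by
      rw [hbdef, hhdef, ← smul_sub, Finset.sum_sub_distrib]
    have h2 : ∑ i, ‖gb i - g i‖ ^ 2 ≤ L ^ 2 * ∑ i, ‖x i - xbar‖ ^ 2 := by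
      rw [Finset.mul_sum]
      apply Finset.sum_le_sum
      intro i _
      have := hsmooth i xbar (x i)
      calc ‖gb i - g i‖ ^ 2 ≤ (L * ‖xbar - x i‖) ^ 2 := by
            apply pow_le_pow_left₀ (norm_nonneg _) this
        _ = L ^ 2 * ‖x i - xbar‖ ^ 2 := by rw [norm_sub_rev]; ring
    calc ‖b - h‖ ^ 2 = ((n:ℝ)⁻¹) ^ 2 * ‖∑ i, (gb i - g i)‖ ^ 2 := by
          rw [h1, norm_smul, Real.norm_eq_abs, abs_of_nonneg (by positivity), mul_pow]
      _ ≤ ((n:ℝ)⁻¹) ^ 2 * (n * (L ^ 2 * ∑ i, ‖x i - xbar‖ ^ 2)) := by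
          gcongr
          exact (hsum_sq _).trans (by gcongr)
      _ = L ^ 2 / n * ∑ i, ‖x i - xbar‖ ^ 2 := by field_simp
  have hbG : ‖b‖ ≤ G := by
    rw [hbdef, norm_smul, Real.norm_eq_abs, abs_of_nonneg (by positivity), hG]
    rw [div_eq_inv_mul]
    gcongr
    exact (norm_sum_le _ _).trans (Finset.sum_le_sum fun i _ => hGi i xbar)
  -- final assembly
  have hSnn : 0 ≤ L ^ 2 / n * ∑ i, ‖x i - xbar‖ ^ 2 := by positivity
  have hkey : -η * (‖b‖ ^ 2 - inner ℝ b (b - h)) + L / 2 * η ^ 2 * (σ ^ 2 / n + ‖h‖ ^ 2)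
      ≤ -(3 * η / 4) * ‖b‖ ^ 2 + 2 * η ^ 2 * L * (σ ^ 2 / n)
        + (η + 2 * η ^ 2 * L) * (L ^ 2 / n * ∑ i, ‖x i - xbar‖ ^ 2)
        + η ^ 2 * L * G ^ 2 := by
    apply scalar_final η L (σ ^ 2 / n) ‖b‖ ‖b - h‖ ‖h‖ _ G (inner ℝ b (b - h)) hη hL
      (by positivity) (norm_nonneg _) (norm_nonneg _) hSnn hG0 (norm_nonneg _) hbh
      ?_ hbG (real_inner_le_norm _ _)
    calc ‖h‖ = ‖b - (b - h)‖ := by rw [sub_sub_cancel]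
      _ ≤ ‖b‖ + ‖b - h‖ := norm_sub_le _ _
      _ = ‖b - h‖ + ‖b‖ := by ring
  have hinner_rw : inner ℝ b h = ‖b‖ ^ 2 - inner ℝ b (b - h) := by
    rw [inner_sub_right, real_inner_self_eq_norm_sq]
    ring
  have hfinal : ∫ ω, Fav (xbar - η • V ω) ∂μ - Fav xbar
      ≤ -(3 * η / 4) * ‖b‖ ^ 2 + 2 * η ^ 2 * L * σ ^ 2 / n
        + (η + 2 * η ^ 2 * L) * (L ^ 2 / n) * ∑ i, ‖x i - xbar‖ ^ 2
        + η ^ 2 * L * G ^ 2 := by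
    have h1 : L / 2 * η ^ 2 * (∫ ω, ‖V ω‖ ^ 2 ∂μ)
        ≤ L / 2 * η ^ 2 * (σ ^ 2 / n + ‖h‖ ^ 2) := by
      have : 0 ≤ L / 2 * η ^ 2 := by positivity
      exact mul_le_mul_of_nonneg_left hVnormsq this
    have h2 := hstep1
    rw [hinner_rw] at h2
    have := hkey
    have heq1 : 2 * η ^ 2 * L * (σ ^ 2 / n) = 2 * η ^ 2 * L * σ ^ 2 / n := by ring
    have heq2 : (η + 2 * η ^ 2 * L) * (L ^ 2 / n * ∑ i, ‖x i - xbar‖ ^ 2)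
        = (η + 2 * η ^ 2 * L) * (L ^ 2 / n) * ∑ i, ‖x i - xbar‖ ^ 2 := by ring
    linarith [heq1 ▸ heq2 ▸ this]
  have hgoal_grad : gradient (fun y => (∑ i, f i y) / n) xbar = b := hgradF_xbar
  calc (∫ ω, (∑ i, f i (xbar - η • V ω)) / n ∂μ) - (∑ i, f i xbar) / n
      = ∫ ω, Fav (xbar - η • V ω) ∂μ - Fav xbar := rfl
    _ ≤ -(3 * η / 4) * ‖b‖ ^ 2 + 2 * η ^ 2 * L * σ ^ 2 / n
        + (η + 2 * η ^ 2 * L) * (L ^ 2 / n) * ∑ i, ‖x i - xbar‖ ^ 2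
        + η ^ 2 * L * G ^ 2 := hfinal
    _ = _ := by rw [hgoal_grad]
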